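/- Let X, Y be subsets of the positive integers and n ≥ 1 an integer with n+1 ∈ Y − X. Then for all k ≥ 0, A_{n+1,k}^{X,Y} = (x_n − (k−1)) · A_{n,k−1}^{X,Y} + (n+1 − (x_n − k)) · A_{n,k}^{X,Y}, where the term with A_{n,k−1}^{X,Y} is omitted when k = 0. -/

import Mathlib

/-- `cnt X n` is `|X ∩ [n]|` where `[n] = {1, ..., n}`. -/
noncomputable def cnt (X : Set ℕ) (n : ℕ) : ℕ := (X ∩ Set.Icc 1 n).ncard

/-- `adj_{X,Y}(σ)`: number of `i` with `σ_i ∈ X` and `σ_{i+1} ∈ Y`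
(positions and values of `Fin n` are identified with `{1, ..., n}` via `i ↦ i + 1`). -/
noncomputable def adjCount (X Y : Set ℕ) (n : ℕ) (σ : Equiv.Perm (Fin n)) : ℕ :=
  {i : Fin n | ∃ h : (i : ℕ) + 1 < n,
    ((σ i : ℕ) + 1) ∈ X ∧ ((σ ⟨(i : ℕ) + 1, h⟩ : ℕ) + 1) ∈ Y}.ncard

/-- `A_{n,s}^{X,Y}`: the number of permutations of `[n]` with exactly `s`
`(X,Y)`-adjacencies. -/
noncomputable def A (X Y : Set ℕ) (n s : ℕ) : ℕ :=
  Nat.card {σ : Equiv.Perm (Fin n) | adjCount X Y n σ = s}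

open Finset

attribute [local instance] Classical.propDecidable

noncomputable def adjS (X Y : Set ℕ) (n : ℕ) (σ : Equiv.Perm (Fin n)) : Finset (Fin n) :=
  Finset.univ.filter (fun i => ∃ h : (i : ℕ) + 1 < n,
    ((σ i : ℕ) + 1) ∈ X ∧ ((σ ⟨(i : ℕ) + 1, h⟩ : ℕ) + 1) ∈ Y)

lemma adjCount_eq (X Y : Set ℕ) (n : ℕ) (σ : Equiv.Perm (Fin n)) :
    adjCount X Y n σ = (adjS X Y n σ).card := by
  rw [adjCount, adjS, ← Set.ncard_coe_finset]
  congr 1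
  ext i
  simp

lemma mem_adjS {X Y : Set ℕ} {n : ℕ} {σ : Equiv.Perm (Fin n)} {i : Fin n} :
    i ∈ adjS X Y n σ ↔ ∃ h : (i : ℕ) + 1 < n,
      ((σ i : ℕ) + 1) ∈ X ∧ ((σ ⟨(i : ℕ) + 1, h⟩ : ℕ) + 1) ∈ Y := by
  simp [adjS]

noncomputable def ins (n : ℕ) (σ : Equiv.Perm (Fin n)) (p : Fin (n + 1)) :
    Equiv.Perm (Fin (n + 1)) :=
  (finSuccEquiv' p).trans ((σ.optionCongr).trans (finSuccEquiv' (Fin.last n)).symm)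

lemma ins_apply_self (n : ℕ) (σ : Equiv.Perm (Fin n)) (p : Fin (n + 1)) :
    ins n σ p p = Fin.last n := by
  simp [ins, finSuccEquiv'_at, finSuccEquiv'_symm_none]

lemma ins_apply_succAbove (n : ℕ) (σ : Equiv.Perm (Fin n)) (p : Fin (n + 1)) (j : Fin n) :
    ins n σ p (p.succAbove j) = (σ j).castSucc := by
  simp [ins, finSuccEquiv'_succAbove, ← Fin.succAbove_last, finSuccEquiv'_symm_some]

lemma ins_apply_eq (n : ℕ) (σ : Equiv.Perm (Fin n)) (p : Fin (n + 1)) (t : Fin (n + 1))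
    (h : (t : ℕ) = (p : ℕ)) : ((ins n σ p t : Fin (n + 1)) : ℕ) = n := by
  have : t = p := Fin.ext h
  rw [this, ins_apply_self]; simp

lemma ins_apply_lt (n : ℕ) (σ : Equiv.Perm (Fin n)) (p : Fin (n + 1)) (t : Fin (n + 1))
    (h : (t : ℕ) < (p : ℕ)) (ht : (t : ℕ) < n) :
    ((ins n σ p t : Fin (n + 1)) : ℕ) = (σ ⟨t, ht⟩ : ℕ) := by
  have e : p.succAbove ⟨t, ht⟩ = t := by
    rw [Fin.succAbove_of_castSucc_lt]
    · rfl
    · exact (by exact_mod_cast h : (Fin.castSucc ⟨t, ht⟩ : Fin (n+1)) < p)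
  have e2 := ins_apply_succAbove n σ p ⟨t, ht⟩
  rw [e] at e2; rw [e2]; simp

lemma ins_apply_gt (n : ℕ) (σ : Equiv.Perm (Fin n)) (p : Fin (n + 1)) (t : Fin (n + 1))
    (h : (p : ℕ) < (t : ℕ)) (ht : (t : ℕ) - 1 < n) :
    ((ins n σ p t : Fin (n + 1)) : ℕ) = (σ ⟨(t : ℕ) - 1, ht⟩ : ℕ) := by
  have e : p.succAbove ⟨(t : ℕ) - 1, ht⟩ = t := by
    rw [Fin.succAbove_of_le_castSucc]
    · apply Fin.ext; simp [Fin.val_succ]; omega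
    · apply Fin.le_def.mpr; simp; omega
  have e2 := ins_apply_succAbove n σ p ⟨(t : ℕ) - 1, ht⟩
  rw [e] at e2; rw [e2]; simp

lemma ins_injective (n : ℕ) :
    Function.Injective (fun q : Equiv.Perm (Fin n) × Fin (n + 1) => ins n q.1 q.2) := by
  rintro ⟨σ, p⟩ ⟨σ', p'⟩ hq
  simp only at hq
  have hp : p = p' := by
    have h1 : ins n σ p p = Fin.last n := ins_apply_self n σ p
    have h2 : ins n σ' p' p' = Fin.last n := ins_apply_self n σ' p'
    rw [hq] at h1
    exact (ins n σ' p').injective (h1.trans h2.symm)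
  subst hp
  have hσ : σ = σ' := by
    ext j
    have h1 := ins_apply_succAbove n σ p j
    have h2 := ins_apply_succAbove n σ' p j
    rw [hq] at h1
    have := h1.symm.trans h2
    have := Fin.castSucc_injective n this
    exact congrArg _ this
  simp [hσ]

lemma ins_bijective (n : ℕ) :
    Function.Bijective (fun q : Equiv.Perm (Fin n) × Fin (n + 1) => ins n q.1 q.2) := by
  rw [Fintype.bijective_iff_injective_and_card]
  refine ⟨ins_injective n, ?_⟩
  simp [Fintype.card_perm, Nat.factorial_succ, Nat.mul_comm]

lemma succAbove_val (n : ℕ) (p : Fin (n + 1)) (i : Fin n) :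
    ((p.succAbove i : Fin (n + 1)) : ℕ) =
      if (i : ℕ) < (p : ℕ) then (i : ℕ) else (i : ℕ) + 1 := by
  by_cases h : (i : ℕ) < (p : ℕ)
  · rw [Fin.succAbove_of_castSucc_lt p i (by exact_mod_cast h)]
    simp [h]
  · rw [Fin.succAbove_of_le_castSucc p i (by simp [Fin.le_def]; omega)]
    simp [h]

lemma mem_adjS' {X Y : Set ℕ} {n : ℕ} {σ : Equiv.Perm (Fin n)} {i : Fin n} :
    i ∈ adjS X Y n σ ↔ ∃ h : (i : ℕ) + 1 < n,
      ((σ i : ℕ) + 1) ∈ X ∧ ((σ ⟨(i : ℕ) + 1, h⟩ : ℕ) + 1) ∈ Y := mem_adjS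

lemma adjS_ins (X Y : Set ℕ) (n : ℕ) (hX : (n + 1) ∉ X) (hY : (n + 1) ∈ Y)
    (σ : Equiv.Perm (Fin n)) (p : Fin (n + 1)) :
    adjS X Y (n + 1) (ins n σ p) =
      ((adjS X Y n σ).filter (fun i : Fin n => (i : ℕ) + 1 ≠ (p : ℕ))).image p.succAbove ∪
      (Finset.univ.filter (fun t : Fin (n + 1) =>
        (t : ℕ) + 1 = (p : ℕ) ∧ ∃ ht : (t : ℕ) < n, ((σ ⟨t, ht⟩ : ℕ) + 1) ∈ X)) := by
  have hp : (p : ℕ) ≤ n := Nat.lt_succ_iff.mp p.isLt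
  ext t
  simp only [Finset.mem_union, Finset.mem_image, Finset.mem_filter, Finset.mem_univ, true_and]
  constructor
  · intro htm
    rw [mem_adjS] at htm
    obtain ⟨h, hx, hy⟩ := htm
    rcases lt_trichotomy ((t : ℕ) + 1) (p : ℕ) with hc | hc | hc
    · -- both t, t+1 < p : old adjacency survives
      have ht1 : (t : ℕ) < n := by omega
      have ht2 : (t : ℕ) + 1 < n := by omega
      left
      refine ⟨⟨(t : ℕ), ht1⟩, ⟨mem_adjS.mpr ⟨ht2, ?hx1, ?hy1⟩, by simpa using hc.ne⟩, ?he1⟩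
      case hx1 => rwa [ins_apply_lt n σ p t (by omega) ht1] at hx
      case hy1 => rwa [ins_apply_lt n σ p ⟨(t : ℕ) + 1, by omega⟩ (by simpa using hc) (by simpa using ht2)] at hy
      case he1 => apply Fin.ext; rw [succAbove_val]; simp; omega
    · -- t+1 = p : new adjacency
      right
      have ht1 : (t : ℕ) < n := by omega
      refine ⟨hc, ht1, ?_⟩
      rwa [ins_apply_lt n σ p t (by omega) ht1] at hx
    · rcases Nat.lt_or_ge (p : ℕ) (t : ℕ) with hc2 | hc2
      · -- t > p
        have htn : (t : ℕ) < n := by omega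
        have ht0 : 1 ≤ (t : ℕ) := by omega
        left
        refine ⟨⟨(t : ℕ) - 1, by omega⟩, ⟨mem_adjS.mpr ⟨by simp; omega, ?hx2, ?hy2⟩, by simp; omega⟩, ?he2⟩
        case hx2 => rwa [ins_apply_gt n σ p t hc2 (by omega)] at hx
        case hy2 =>
          rw [ins_apply_gt n σ p ⟨(t : ℕ) + 1, by omega⟩ (by simp; omega) (by simp; omega)] at hy
          convert hy using 5
          simp; omega
        case he2 =>
          apply Fin.ext
          rw [succAbove_val]
          rw [if_neg (by simp; omega)]
          simp; omega
      · -- t = p : first letter is n+1 ∉ X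
        have : (t : ℕ) = (p : ℕ) := by omega
        rw [ins_apply_eq n σ p t this] at hx
        exact absurd hx hX
  · rintro (⟨i, ⟨hi, hip⟩, rfl⟩ | ⟨hc, ht1, hxm⟩)
    · rw [mem_adjS] at hi
      obtain ⟨hilt, hix, hiy⟩ := hi
      rcases Nat.lt_or_ge (i : ℕ) (p : ℕ) with hlt | hge
      · have hv : ((p.succAbove i : Fin (n + 1)) : ℕ) = (i : ℕ) := by
          rw [succAbove_val]; simp [hlt]
        rw [mem_adjS]
        refine ⟨by omega, ?_, ?_⟩
        · rw [ins_apply_lt n σ p _ (by omega) (by omega : ((p.succAbove i : Fin (n+1)) : ℕ) < n)]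
          convert hix using 3
          apply Fin.ext; simp [hv]
        · rw [ins_apply_lt n σ p ⟨_, _⟩ (by simp [hv]; omega) (by simp [hv]; omega)]
          convert hiy using 3
          apply Fin.ext; simp [hv]
      · have hv : ((p.succAbove i : Fin (n + 1)) : ℕ) = (i : ℕ) + 1 := by
          rw [succAbove_val]; simp; omega
        rw [mem_adjS]
        refine ⟨by omega, ?_, ?_⟩
        · rw [ins_apply_gt n σ p _ (by omega) (by omega : ((p.succAbove i : Fin (n+1)) : ℕ) - 1 < n)]
          convert hix using 3
          apply Fin.ext; simp [hv]
        · rw [ins_apply_gt n σ p ⟨_, _⟩ (by simp [hv]; omega) (by simp [hv]; omega)]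
          convert hiy using 5
          simp [hv]
    · rw [mem_adjS]
      refine ⟨by omega, ?_, ?_⟩
      · rw [ins_apply_lt n σ p t (by omega) ht1]
        exact hxm
      · rw [ins_apply_eq n σ p ⟨(t : ℕ) + 1, by omega⟩ (by simpa using hc)]
        exact hY

def goodP (X Y : Set ℕ) (n : ℕ) (σ : Equiv.Perm (Fin n)) (p : Fin (n + 1)) : Prop :=
  ∃ j : Fin n, (p : ℕ) = (j : ℕ) + 1 ∧ ((σ j : ℕ) + 1) ∈ X ∧ j ∉ adjS X Y n σ

lemma adjCount_ins (X Y : Set ℕ) (n : ℕ) (hX : (n + 1) ∉ X) (hY : (n + 1) ∈ Y)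
    (σ : Equiv.Perm (Fin n)) (p : Fin (n + 1)) :
    adjCount X Y (n + 1) (ins n σ p) =
      if goodP X Y n σ p then adjCount X Y n σ + 1 else adjCount X Y n σ := by
  rw [adjCount_eq, adjCount_eq, adjS_ins X Y n hX hY σ p]
  have hdisj : Disjoint
      (((adjS X Y n σ).filter (fun i : Fin n => (i : ℕ) + 1 ≠ (p : ℕ))).image p.succAbove)
      (Finset.univ.filter (fun t : Fin (n + 1) =>
        (t : ℕ) + 1 = (p : ℕ) ∧ ∃ ht : (t : ℕ) < n, ((σ ⟨t, ht⟩ : ℕ) + 1) ∈ X)) := by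
    rw [Finset.disjoint_left]
    rintro t ht1 ht2
    simp only [Finset.mem_image, Finset.mem_filter, Finset.mem_univ, true_and] at ht1 ht2
    obtain ⟨i, ⟨_, hip⟩, rfl⟩ := ht1
    obtain ⟨hpe, _⟩ := ht2
    rw [succAbove_val] at hpe
    by_cases hlt : (i : ℕ) < (p : ℕ) <;> simp [hlt] at hpe <;> omega
  rw [Finset.card_union_of_disjoint hdisj,
    Finset.card_image_of_injective _ (Fin.succAbove_right_injective)]
  have hsplit := Finset.card_filter_add_card_filter_not
    (s := adjS X Y n σ) (p := fun i : Fin n => (i : ℕ) + 1 = (p : ℕ))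
  by_cases hg : goodP X Y n σ p
  · obtain ⟨j, hj1, hj2, hj3⟩ := hg
    -- no old adjacency destroyed : the eq-filter is empty
    have hold : (adjS X Y n σ).filter (fun i : Fin n => (i : ℕ) + 1 = (p : ℕ)) = ∅ := by
      rw [Finset.filter_eq_empty_iff]
      intro i hi hie
      have : i = j := Fin.ext (by omega)
      exact hj3 (this ▸ hi)
    have hnew : (Finset.univ.filter (fun t : Fin (n + 1) =>
        (t : ℕ) + 1 = (p : ℕ) ∧ ∃ ht : (t : ℕ) < n, ((σ ⟨t, ht⟩ : ℕ) + 1) ∈ X)) =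
        {(j.castSucc : Fin (n + 1))} := by
      ext t
      simp only [Finset.mem_filter, Finset.mem_univ, true_and, Finset.mem_singleton]
      constructor
      · rintro ⟨he, _, _⟩
        apply Fin.ext; simp; omega
      · rintro rfl
        refine ⟨by simp; omega, by simp [j.isLt], ?_⟩
        convert hj2 using 4
        exact Fin.ext (by simp)
    rw [hnew, Finset.card_singleton, if_pos ⟨j, hj1, hj2, hj3⟩]
    rw [hold, Finset.card_empty, zero_add] at hsplit
    rw [Finset.filter_congr (fun i _ => by tauto), hsplit]
  · rw [if_neg hg]
    by_cases hex : ∃ j : Fin n, (p : ℕ) = (j : ℕ) + 1 ∧ ((σ j : ℕ) + 1) ∈ X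
    · -- the destroyed adjacency is replaced by the new one
      obtain ⟨j, hj1, hj2⟩ := hex
      have hjadj : j ∈ adjS X Y n σ := by
        by_contra hc
        exact hg ⟨j, hj1, hj2, hc⟩
      have hold : (adjS X Y n σ).filter (fun i : Fin n => (i : ℕ) + 1 = (p : ℕ)) = {j} := by
        ext i
        simp only [Finset.mem_filter, Finset.mem_singleton]
        constructor
        · rintro ⟨_, hie⟩; exact Fin.ext (by omega)
        · rintro rfl; exact ⟨hjadj, by omega⟩
      have hnew : (Finset.univ.filter (fun t : Fin (n + 1) =>
          (t : ℕ) + 1 = (p : ℕ) ∧ ∃ ht : (t : ℕ) < n, ((σ ⟨t, ht⟩ : ℕ) + 1) ∈ X)) =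
          {(j.castSucc : Fin (n + 1))} := by
        ext t
        simp only [Finset.mem_filter, Finset.mem_univ, true_and, Finset.mem_singleton]
        constructor
        · rintro ⟨he, _, _⟩
          apply Fin.ext; simp; omega
        · rintro rfl
          refine ⟨by simp; omega, by simp [j.isLt], ?_⟩
          convert hj2 using 4
          exact Fin.ext (by simp)
      rw [hnew, Finset.card_singleton]
      rw [hold, Finset.card_singleton] at hsplit
      have hpos : 1 ≤ (adjS X Y n σ).card := by
        rw [← hsplit]; omega
      simp only [ne_eq] at hsplit ⊢
      omega
    · -- nothing destroyed, nothing created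
      have hold : (adjS X Y n σ).filter (fun i : Fin n => (i : ℕ) + 1 = (p : ℕ)) = ∅ := by
        rw [Finset.filter_eq_empty_iff]
        intro i hi hie
        refine hex ⟨i, by omega, ?_⟩
        exact (mem_adjS.mp hi).choose_spec.1
      have hnew : (Finset.univ.filter (fun t : Fin (n + 1) =>
          (t : ℕ) + 1 = (p : ℕ) ∧ ∃ ht : (t : ℕ) < n, ((σ ⟨t, ht⟩ : ℕ) + 1) ∈ X)) = ∅ := by
        rw [Finset.filter_eq_empty_iff]
        rintro t _ ⟨he, ht, hxm⟩
        exact hex ⟨⟨(t : ℕ), ht⟩, by simpa using he.symm, hxm⟩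
      rw [hnew, Finset.card_empty, add_zero]
      rw [hold, Finset.card_empty, zero_add] at hsplit
      rw [Finset.filter_congr (fun i _ => by tauto), hsplit]

lemma card_T (X : Set ℕ) (n : ℕ) (σ : Equiv.Perm (Fin n)) :
    (Finset.univ.filter (fun j : Fin n => ((σ j : ℕ) + 1) ∈ X)).card = cnt X n := by
  have hinj : Function.Injective (fun j : Fin n => ((σ j : ℕ) + 1)) := by
    intro a b hab
    simp only [add_left_inj, Fin.val_inj] at hab
    exact σ.injective hab
  have himg : X ∩ Set.Icc 1 n =
      (fun j : Fin n => ((σ j : ℕ) + 1)) '' {j | ((σ j : ℕ) + 1) ∈ X} := by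
    ext x
    simp only [Set.mem_inter_iff, Set.mem_Icc, Set.mem_image, Set.mem_setOf_eq]
    constructor
    · rintro ⟨hx, hx1, hxn⟩
      refine ⟨σ.symm ⟨x - 1, by omega⟩, ?_, ?_⟩
      · simp only [Equiv.apply_symm_apply]
        have hxe : x - 1 + 1 = x := by omega
        simpa [hxe] using hx
      · simp only [Equiv.apply_symm_apply]
        omega
    · rintro ⟨j, hj, rfl⟩
      exact ⟨hj, by omega, by have := (σ j).isLt; omega⟩
  rw [cnt, himg, Set.ncard_image_of_injective _ hinj, ← Set.ncard_coe_finset]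
  congr 1
  ext j
  simp

lemma adjS_subset_T (X Y : Set ℕ) (n : ℕ) (σ : Equiv.Perm (Fin n)) :
    adjS X Y n σ ⊆ Finset.univ.filter (fun j : Fin n => ((σ j : ℕ) + 1) ∈ X) := by
  intro j hj
  simp only [Finset.mem_filter, Finset.mem_univ, true_and]
  exact (mem_adjS.mp hj).choose_spec.1

lemma adjCount_le_cnt (X Y : Set ℕ) (n : ℕ) (σ : Equiv.Perm (Fin n)) :
    adjCount X Y n σ ≤ cnt X n := by
  rw [adjCount_eq, ← card_T X n σ]
  exact Finset.card_le_card (adjS_subset_T X Y n σ)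

lemma filter_good_eq (X Y : Set ℕ) (n : ℕ) (σ : Equiv.Perm (Fin n)) :
    Finset.univ.filter (goodP X Y n σ) =
      ((Finset.univ.filter (fun j : Fin n => ((σ j : ℕ) + 1) ∈ X)) \ adjS X Y n σ).image
        Fin.succ := by
  ext p
  simp only [Finset.mem_filter, Finset.mem_univ, true_and, Finset.mem_image, Finset.mem_sdiff,
    goodP]
  constructor
  · rintro ⟨j, hj1, hj2, hj3⟩
    exact ⟨j, ⟨hj2, hj3⟩, Fin.ext (by simp [Fin.val_succ]; omega)⟩
  · rintro ⟨j, ⟨hj2, hj3⟩, rfl⟩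
    exact ⟨j, by simp [Fin.val_succ], hj2, hj3⟩

lemma card_good (X Y : Set ℕ) (n : ℕ) (σ : Equiv.Perm (Fin n)) :
    (Finset.univ.filter (goodP X Y n σ)).card = cnt X n - adjCount X Y n σ := by
  rw [filter_good_eq, Finset.card_image_of_injective _ (Fin.succ_injective n),
    Finset.card_sdiff_of_subset (adjS_subset_T X Y n σ), card_T, adjCount_eq]

lemma fiber_card (X Y : Set ℕ) (n : ℕ) (hX : (n + 1) ∉ X) (hY : (n + 1) ∈ Y)
    (σ : Equiv.Perm (Fin n)) (k : ℕ) :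
    (Finset.univ.filter
        (fun p : Fin (n + 1) => adjCount X Y (n + 1) (ins n σ p) = k)).card =
      if k = adjCount X Y n σ + 1 then cnt X n - adjCount X Y n σ
      else if k = adjCount X Y n σ then (n + 1) - (cnt X n - adjCount X Y n σ)
      else 0 := by
  have hval : ∀ p : Fin (n + 1), adjCount X Y (n + 1) (ins n σ p) =
      if goodP X Y n σ p then adjCount X Y n σ + 1 else adjCount X Y n σ :=
    fun p => adjCount_ins X Y n hX hY σ p
  by_cases h1 : k = adjCount X Y n σ + 1
  · rw [if_pos h1, ← card_good X Y n σ]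
    congr 1
    apply Finset.filter_congr
    intro p _
    rw [hval p]
    by_cases hg : goodP X Y n σ p <;> simp [hg, h1] <;> omega
  · rw [if_neg h1]
    by_cases h2 : k = adjCount X Y n σ
    · rw [if_pos h2]
      have : (Finset.univ.filter
          (fun p : Fin (n + 1) => adjCount X Y (n + 1) (ins n σ p) = k)) =
          Finset.univ.filter (fun p => ¬ goodP X Y n σ p) := by
        apply Finset.filter_congr
        intro p _
        rw [hval p]
        by_cases hg : goodP X Y n σ p <;> simp [hg, h1, h2] <;> omega
      rw [this]
      have hs := Finset.card_filter_add_card_filter_not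
        (s := (Finset.univ : Finset (Fin (n + 1)))) (p := goodP X Y n σ)
      rw [card_good X Y n σ] at hs
      simp only [Finset.card_univ, Fintype.card_fin] at hs
      omega
    · rw [if_neg h2]
      rw [Finset.card_eq_zero, Finset.filter_eq_empty_iff]
      intro p _
      rw [hval p]
      by_cases hg : goodP X Y n σ p <;> simp [hg] <;> omega

lemma A_eq_filter (X Y : Set ℕ) (m s : ℕ) :
    A X Y m s =
      (Finset.univ.filter (fun σ : Equiv.Perm (Fin m) => adjCount X Y m σ = s)).card := by
  rw [A, Nat.card_coe_set_eq, ← Set.ncard_coe_finset]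
  congr 1
  ext σ
  simp

lemma cnt_le (X : Set ℕ) (n : ℕ) : cnt X n ≤ n := by
  rw [cnt]
  calc (X ∩ Set.Icc 1 n).ncard ≤ (Set.Icc 1 n).ncard :=
        Set.ncard_le_ncard Set.inter_subset_right (Set.finite_Icc 1 n)
    _ ≤ n := by rw [← Finset.coe_Icc, Set.ncard_coe_finset, Nat.card_Icc]; omega

lemma exists_of_A_ne_zero {X Y : Set ℕ} {m s : ℕ} (h : A X Y m s ≠ 0) :
    ∃ σ : Equiv.Perm (Fin m), adjCount X Y m σ = s := by
  rw [A_eq_filter] at h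
  obtain ⟨σ, hσ⟩ := Finset.card_ne_zero.mp h
  exact ⟨σ, (Finset.mem_filter.mp hσ).2⟩

lemma main_nat (X Y : Set ℕ) (n : ℕ) (hX : (n + 1) ∉ X) (hY : (n + 1) ∈ Y) (k : ℕ) :
    A X Y (n + 1) k =
      (cnt X n - (k - 1)) * (if k = 0 then 0 else A X Y n (k - 1)) +
      ((n + 1) - (cnt X n - k)) * A X Y n k := by
  rw [A_eq_filter, Finset.card_filter]
  rw [← Equiv.sum_comp (Equiv.ofBijective _ (ins_bijective n))
    (fun τ => if adjCount X Y (n + 1) τ = k then 1 else 0)]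
  rw [Fintype.sum_prod_type]
  have step : ∀ σ : Equiv.Perm (Fin n),
      (∑ p : Fin (n + 1), if adjCount X Y (n + 1)
          ((Equiv.ofBijective _ (ins_bijective n)) (σ, p)) = k then 1 else 0) =
        (if k = adjCount X Y n σ + 1 then cnt X n - (k - 1) else 0) +
        (if k = adjCount X Y n σ then (n + 1) - (cnt X n - k) else 0) := by
    intro σ
    have : (∑ p : Fin (n + 1), if adjCount X Y (n + 1)
        ((Equiv.ofBijective _ (ins_bijective n)) (σ, p)) = k then 1 else 0) =
        (Finset.univ.filter
          (fun p : Fin (n + 1) => adjCount X Y (n + 1) (ins n σ p) = k)).card := by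
      rw [Finset.card_filter]
      rfl
    rw [this, fiber_card X Y n hX hY σ k]
    by_cases h1 : k = adjCount X Y n σ + 1
    · rw [if_pos h1, if_pos h1, if_neg (by omega), add_zero]
      congr 1
      omega
    · rw [if_neg h1, if_neg h1, zero_add]
      by_cases h2 : k = adjCount X Y n σ
      · rw [if_pos h2, if_pos h2]
        congr 2
        omega
      · rw [if_neg h2, if_neg h2]
  rw [Finset.sum_congr rfl (fun σ _ => step σ), Finset.sum_add_distrib]
  congr 1
  · rw [← Finset.sum_filter, Finset.sum_const, smul_eq_mul]
    by_cases hk : k = 0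
    · subst hk
      simp
    · rw [if_neg hk, Nat.mul_comm, A_eq_filter]
      congr 2
      apply Finset.filter_congr
      intro σ _
      omega
  · rw [← Finset.sum_filter, Finset.sum_const, smul_eq_mul, Nat.mul_comm, A_eq_filter]
    congr 2
    apply Finset.filter_congr
    intro σ _
    exact eq_comm


/-- Recurrence for `A_{n,k}^{X,Y}` when `n+1 ∈ Y - X`:
`A_{n+1,k} = (x_n - (k-1)) A_{n,k-1} + (n+1 - (x_n - k)) A_{n,k}`,
the first term being omitted when `k = 0`. -/
theorem A_rec_case4 (X Y : Set ℕ) (hX : 0 ∉ X) (hY : 0 ∉ Y) (n : ℕ) (hn : 1 ≤ n)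
    (h : n + 1 ∈ Y \ X) (k : ℕ) :
    (A X Y (n + 1) k : ℤ) =
      (if k = 0 then 0 else
        ((cnt X n : ℤ) - ((k : ℤ) - 1)) * (A X Y n (k - 1) : ℤ)) +
        ((n : ℤ) + 1 - ((cnt X n : ℤ) - (k : ℤ))) * (A X Y n k : ℤ) := by
  obtain ⟨hYm, hXm⟩ := h
  have key := main_nat X Y n hXm hYm k
  have hcn : cnt X n ≤ n := cnt_le X n
  have e2 : ((((n + 1) - (cnt X n - k)) * A X Y n k : ℕ) : ℤ) =
      ((n : ℤ) + 1 - ((cnt X n : ℤ) - (k : ℤ))) * (A X Y n k : ℤ) := by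
    by_cases hA : A X Y n k = 0
    · simp [hA]
    · obtain ⟨σ, hσ⟩ := exists_of_A_ne_zero hA
      have hkc : k ≤ cnt X n := hσ ▸ adjCount_le_cnt X Y n σ
      rw [Nat.cast_mul, Nat.cast_sub (by omega : cnt X n - k ≤ n + 1),
        Nat.cast_sub hkc]
      push_cast
      ring
  have e1 : (((cnt X n - (k - 1)) * (if k = 0 then 0 else A X Y n (k - 1)) : ℕ) : ℤ) =
      (if k = 0 then 0 else
        ((cnt X n : ℤ) - ((k : ℤ) - 1)) * (A X Y n (k - 1) : ℤ)) := by
    by_cases hk0 : k = 0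
    · simp [hk0]
    · rw [if_neg hk0, if_neg hk0]
      by_cases hA : A X Y n (k - 1) = 0
      · simp [hA]
      · obtain ⟨σ, hσ⟩ := exists_of_A_ne_zero hA
        have hkc : k - 1 ≤ cnt X n := hσ ▸ adjCount_le_cnt X Y n σ
        rw [Nat.cast_mul, Nat.cast_sub hkc]
        have hc : ((k - 1 : ℕ) : ℤ) = (k : ℤ) - 1 := by omega
        rw [hc]
  rw [key, Nat.cast_add, e1, e2]
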